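/- Plain regular expressions that are equivalent with respect to the congruence ≅ normalize to the same normalized expression: if E₁ ≅ E₂ then the normalization of E₁ is syntactically equal to the normalization of E₂. -/

import Mathlib

/-- Normalized regular expression syntax trees over alphabet `ℕ`. -/
inductive NE : Type where
  | zero : NE
  | one : NE
  | letter : ℕ → NE
  | union : List NE → NE
  | cat : NE → NE → NE
  | star : NE → NE

namespace NE

def isUnion : NE → Prop
  | union _ => True
  | _ => False

def isCat : NE → Prop
  | cat _ _ => True
  | _ => False

def isStar : NE → Prop
  | star _ => True
  | _ => False

/-- Well-formedness of normalized expressions w.r.t. a fixed total order `lt`. -/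
inductive Norm (lt : NE → NE → Prop) : NE → Prop where
  | zero : Norm lt zero
  | one : Norm lt one
  | letter (n : ℕ) : Norm lt (letter n)
  | union (es : List NE) (hlen : 2 ≤ es.length)
      (hmem : ∀ e ∈ es, Norm lt e)
      (hshape : ∀ e ∈ es, ¬ e.isUnion ∧ e ≠ zero)
      (hsorted : es.Chain' lt) : Norm lt (union es)
  | cat (e₁ e₂ : NE) (h₁ : Norm lt e₁) (h₂ : Norm lt e₂)
      (hz₁ : e₁ ≠ zero) (ho₁ : e₁ ≠ one) (hz₂ : e₂ ≠ zero) (ho₂ : e₂ ≠ one)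
      (hc : ¬ e₁.isCat) : Norm lt (cat e₁ e₂)
  | star (e : NE) (h : Norm lt e) (hz : e ≠ zero) (ho : e ≠ one)
      (hs : ¬ e.isStar) : Norm lt (star e)

/-- Top-level summands: none for `0`, the list for a union, a singleton otherwise. -/
def summands : NE → List NE
  | zero => []
  | union es => es
  | e => [e]

/-- Insert into a strictly sorted list, dropping duplicates. -/
def insertSorted (lt : NE → NE → Prop) [DecidableRel lt] (a : NE) : List NE → List NE
  | [] => [a]
  | b :: l => if lt a b then a :: b :: l
              else if lt b a then b :: insertSorted lt a l
              else b :: l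

/-- Sort and de-duplicate a list of expressions. -/
def sortDedup (lt : NE → NE → Prop) [DecidableRel lt] : List NE → List NE
  | [] => []
  | a :: l => insertSorted lt a (sortDedup lt l)

/-- Rebuild a normalized expression from a list of summands. -/
def ofSummands : List NE → NE
  | [] => zero
  | [e] => e
  | es => union es

/-- The operation ⊕ of the paper. -/
def nunion (lt : NE → NE → Prop) [DecidableRel lt] (e₁ e₂ : NE) : NE :=
  ofSummands (sortDedup lt (summands e₁ ++ summands e₂))

/-- The operation ⊙ of the paper. -/
def ncat : NE → NE → NE
  | zero, _ => zero
  | _, zero => zero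
  | one, e => e
  | e, one => e
  | cat f₁ f₂, e₂ => cat f₁ (ncat f₂ e₂)
  | e₁, e₂ => cat e₁ e₂

/-- The operation `iter` of the paper. -/
def niter : NE → NE
  | zero => one
  | one => one
  | star e => star e
  | e => star e

/-- The language denoted by a normalized expression (union = sum of languages). -/
def lang : NE → Language ℕ
  | zero => 0
  | one => 1
  | letter n => {[n]}
  | union es => es.attach.foldr (fun e acc => lang e.1 + acc) 0
  | cat e₁ e₂ => lang e₁ * lang e₂
  | star e => KStar.kstar (lang e)
decreasing_by
  all_goals simp_wf
  · have := List.sizeOf_lt_of_mem e.2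
    omega
  all_goals omega

end NE

/-- Normalization of plain regular expressions into normalized expressions. -/
def normRE (lt : NE → NE → Prop) [DecidableRel lt] : RegularExpression ℕ → NE
  | .zero => .zero
  | .epsilon => .one
  | .char n => .letter n
  | .plus a b => NE.nunion lt (normRE lt a) (normRE lt b)
  | .comp a b => NE.ncat (normRE lt a) (normRE lt b)
  | .star a => NE.niter (normRE lt a)

/-- The least congruence ≅ on plain regular expressions of Definition 3 of the paper. -/
inductive Cong : RegularExpression ℕ → RegularExpression ℕ → Prop where
  | refl (e : RegularExpression ℕ) : Cong e e
  | symm {a b} : Cong a b → Cong b a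
  | trans {a b c} : Cong a b → Cong b c → Cong a c
  | plus_congr {a b c d} : Cong a b → Cong c d → Cong (a.plus c) (b.plus d)
  | comp_congr {a b c d} : Cong a b → Cong c d → Cong (a.comp c) (b.comp d)
  | star_congr {a b} : Cong a b → Cong a.star b.star
  | plus_idem (e : RegularExpression ℕ) : Cong (e.plus e) e
  | zero_plus (e : RegularExpression ℕ) : Cong (RegularExpression.plus 0 e) e
  | plus_zero (e : RegularExpression ℕ) : Cong (e.plus 0) e
  | zero_comp (e : RegularExpression ℕ) : Cong (RegularExpression.comp 0 e) 0
  | comp_zero (e : RegularExpression ℕ) : Cong (e.comp 0) 0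
  | one_comp (e : RegularExpression ℕ) : Cong (RegularExpression.comp 1 e) e
  | comp_one (e : RegularExpression ℕ) : Cong (e.comp 1) e
  | plus_assoc (a b c : RegularExpression ℕ) : Cong (a.plus (b.plus c)) ((a.plus b).plus c)
  | plus_comm (a b : RegularExpression ℕ) : Cong (a.plus b) (b.plus a)
  | comp_assoc (a b c : RegularExpression ℕ) : Cong (a.comp (b.comp c)) ((a.comp b).comp c)
  | zero_star : Cong (RegularExpression.star 0) 1
  | one_star : Cong (RegularExpression.star 1) 1
  | star_star (e : RegularExpression ℕ) : Cong e.star.star e.star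


section Aux
set_option linter.unusedSectionVars false

variable (lt : NE → NE → Prop) [DecidableRel lt] [IsStrictTotalOrder NE lt]

lemma sorted_unique : ∀ {l₁ l₂ : List NE}, l₁.Pairwise lt → l₂.Pairwise lt →
    (∀ x, x ∈ l₁ ↔ x ∈ l₂) → l₁ = l₂ := by
  intro l₁
  induction l₁ with
  | nil =>
    intro l₂ _ _ hm
    cases l₂ with
    | nil => rfl
    | cons b t => exact absurd ((hm b).2 (List.mem_cons_self ..)) List.not_mem_nil
  | cons a t ih =>
    intro l₂ h₁ h₂ hm
    cases l₂ with
    | nil => exact absurd ((hm a).1 (List.mem_cons_self ..)) List.not_mem_nil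
    | cons b t₂ =>
      have hab : a = b := by
        rcases List.mem_cons.1 ((hm a).1 (List.mem_cons_self ..)) with h | h
        · exact h
        · rcases List.mem_cons.1 ((hm b).2 (List.mem_cons_self ..)) with h' | h'
          · exact h'.symm
          · exact absurd (IsTrans.trans a b a (List.rel_of_pairwise_cons h₁ h')
              (List.rel_of_pairwise_cons h₂ h)) (irrefl_of lt a)
      subst hab
      have hmt : ∀ x, x ∈ t ↔ x ∈ t₂ := by
        intro x
        constructor
        · intro hx
          rcases List.mem_cons.1 ((hm x).1 (List.mem_cons_of_mem a hx)) with h | h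
          · subst h; exact absurd (List.rel_of_pairwise_cons h₁ hx) (irrefl_of lt x)
          · exact h
        · intro hx
          rcases List.mem_cons.1 ((hm x).2 (List.mem_cons_of_mem a hx)) with h | h
          · subst h; exact absurd (List.rel_of_pairwise_cons h₂ hx) (irrefl_of lt x)
          · exact h
      rw [ih (List.pairwise_cons.1 h₁).2 (List.pairwise_cons.1 h₂).2 hmt]

lemma mem_insertSorted (a x : NE) : ∀ l, x ∈ NE.insertSorted lt a l ↔ x = a ∨ x ∈ l := by
  intro l
  induction l with
  | nil => simp [NE.insertSorted]
  | cons b t ih =>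
    simp only [NE.insertSorted]
    split
    · simp [List.mem_cons]
    · split
      · simp only [List.mem_cons, ih]; tauto
      · rename_i h1 h2
        have hab : a = b := by
          rcases trichotomous_of lt a b with h | h | h
          · exact absurd h h1
          · exact h
          · exact absurd h h2
        subst hab
        simp only [List.mem_cons]; tauto

lemma pairwise_insertSorted (a : NE) : ∀ l, l.Pairwise lt → (NE.insertSorted lt a l).Pairwise lt := by
  intro l
  induction l with
  | nil => intro _; simp [NE.insertSorted]
  | cons b t ih =>
    intro h
    rw [List.pairwise_cons] at h
    simp only [NE.insertSorted]
    split
    · rename_i hab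
      refine List.pairwise_cons.2 ⟨?_, List.pairwise_cons.2 h⟩
      intro y hy
      rcases List.mem_cons.1 hy with rfl | hy
      · exact hab
      · exact IsTrans.trans a b y hab (h.1 y hy)
    · split
      · rename_i _ hba
        refine List.pairwise_cons.2 ⟨?_, ih h.2⟩
        intro y hy
        rcases (mem_insertSorted lt a y t).1 hy with rfl | hy
        · exact hba
        · exact h.1 y hy
      · exact List.pairwise_cons.2 h

lemma mem_sortDedup (x : NE) : ∀ l, x ∈ NE.sortDedup lt l ↔ x ∈ l := by
  intro l
  induction l with
  | nil => simp [NE.sortDedup]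
  | cons a t ih => simp [NE.sortDedup, mem_insertSorted, ih]

lemma pairwise_sortDedup : ∀ l, (NE.sortDedup lt l).Pairwise lt := by
  intro l
  induction l with
  | nil => simp [NE.sortDedup]
  | cons a t ih => exact pairwise_insertSorted lt a _ ih

lemma sortDedup_eq_self {l : List NE} (h : l.Pairwise lt) : NE.sortDedup lt l = l :=
  sorted_unique lt (pairwise_sortDedup lt l) h (fun x => mem_sortDedup lt x l)

lemma sortDedup_congr {l₁ l₂ : List NE} (h : ∀ x, x ∈ l₁ ↔ x ∈ l₂) :
    NE.sortDedup lt l₁ = NE.sortDedup lt l₂ :=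
  sorted_unique lt (pairwise_sortDedup ..) (pairwise_sortDedup ..)
    (fun x => by rw [mem_sortDedup, mem_sortDedup]; exact h x)

lemma summands_eq_single (e : NE) (h1 : ¬ e.isUnion) (h2 : e ≠ NE.zero) :
    NE.summands e = [e] := by
  cases e <;> simp_all [NE.summands, NE.isUnion]

/-- Invariant maintained by normalization, phrased on summand lists. -/
def Good (e : NE) : Prop :=
  (∀ f ∈ e.summands, ¬ f.isUnion ∧ f ≠ NE.zero) ∧ e.summands.Pairwise lt ∧
    NE.ofSummands e.summands = e

lemma good_zero : Good lt NE.zero :=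
  ⟨by intro f hf; simp [NE.summands] at hf, by simp [NE.summands], rfl⟩

lemma good_of_shape (e : NE) (h1 : ¬ e.isUnion) (h2 : e ≠ NE.zero) : Good lt e := by
  refine ⟨?_, ?_, ?_⟩ <;> rw [summands_eq_single e h1 h2]
  · intro f hf
    rw [List.mem_singleton] at hf
    subst hf
    exact ⟨h1, h2⟩
  · simp
  · rfl

lemma good_ofSummands {l : List NE} (h : ∀ f ∈ l, ¬ f.isUnion ∧ f ≠ NE.zero)
    (hp : l.Pairwise lt) :
    Good lt (NE.ofSummands l) ∧ NE.summands (NE.ofSummands l) = l := by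
  rcases l with _ | ⟨a, _ | ⟨b, t⟩⟩
  · exact ⟨good_zero lt, rfl⟩
  · have he := h a (List.mem_singleton_self a)
    exact ⟨good_of_shape lt a he.1 he.2, summands_eq_single a he.1 he.2⟩
  · exact ⟨⟨h, hp, rfl⟩, rfl⟩

lemma good_nunion {e₁ e₂ : NE} (h₁ : Good lt e₁) (h₂ : Good lt e₂) :
    Good lt (NE.nunion lt e₁ e₂) ∧
      NE.summands (NE.nunion lt e₁ e₂) = NE.sortDedup lt (e₁.summands ++ e₂.summands) := by
  refine good_ofSummands lt ?_ (pairwise_sortDedup ..)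
  intro f hf
  rw [mem_sortDedup] at hf
  rcases List.mem_append.1 hf with hf | hf
  · exact h₁.1 f hf
  · exact h₂.1 f hf

lemma nunion_self {e : NE} (h : Good lt e) : NE.nunion lt e e = e := by
  have h1 : NE.sortDedup lt (e.summands ++ e.summands) = e.summands :=
    sorted_unique lt (pairwise_sortDedup ..) h.2.1
      (fun x => by rw [mem_sortDedup]; simp)
  show NE.ofSummands (NE.sortDedup lt (e.summands ++ e.summands)) = e
  rw [h1]
  exact h.2.2

lemma nunion_zero {e : NE} (h : Good lt e) : NE.nunion lt e NE.zero = e := by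
  show NE.ofSummands (NE.sortDedup lt (e.summands ++ NE.summands NE.zero)) = e
  rw [show NE.summands NE.zero = [] from rfl, List.append_nil,
    sortDedup_eq_self lt h.2.1]
  exact h.2.2

lemma zero_nunion {e : NE} (h : Good lt e) : NE.nunion lt NE.zero e = e := by
  show NE.ofSummands (NE.sortDedup lt (NE.summands NE.zero ++ e.summands)) = e
  rw [show NE.summands NE.zero = [] from rfl, List.nil_append,
    sortDedup_eq_self lt h.2.1]
  exact h.2.2

lemma nunion_comm (e₁ e₂ : NE) : NE.nunion lt e₁ e₂ = NE.nunion lt e₂ e₁ := by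
  show NE.ofSummands _ = NE.ofSummands _
  congr 1
  exact sortDedup_congr lt (fun x => by rw [List.mem_append, List.mem_append]; exact or_comm)

lemma nunion_assoc {a b c : NE} (ha : Good lt a) (hb : Good lt b) (hc : Good lt c) :
    NE.nunion lt a (NE.nunion lt b c) = NE.nunion lt (NE.nunion lt a b) c := by
  show NE.ofSummands _ = NE.ofSummands _
  congr 1
  refine sortDedup_congr lt (fun x => ?_)
  simp only [List.mem_append, (good_nunion lt hb hc).2, (good_nunion lt ha hb).2,
    mem_sortDedup, or_assoc]

lemma zero_ncat (e : NE) : NE.ncat NE.zero e = NE.zero := by cases e <;> rfl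

lemma ncat_zero (e : NE) : NE.ncat e NE.zero = NE.zero := by cases e <;> rfl

lemma one_ncat (e : NE) : NE.ncat NE.one e = e := by cases e <;> rfl

lemma ncat_one (e : NE) : NE.ncat e NE.one = e := by cases e <;> rfl

lemma cat_ncat (f₁ f₂ e : NE) (h0 : e ≠ NE.zero) (h1 : e ≠ NE.one) :
    NE.ncat (NE.cat f₁ f₂) e = NE.cat f₁ (NE.ncat f₂ e) := by
  cases e <;> first | rfl | simp_all

lemma base_ncat (a e : NE) (ha : ¬ a.isCat) (ha0 : a ≠ NE.zero) (ha1 : a ≠ NE.one)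
    (h0 : e ≠ NE.zero) (h1 : e ≠ NE.one) : NE.ncat a e = NE.cat a e := by
  cases a <;> cases e <;> first | rfl | simp_all [NE.isCat]

lemma ncat_ne_zero {a b : NE} (ha : a ≠ NE.zero) (hb : b ≠ NE.zero) :
    NE.ncat a b ≠ NE.zero := by
  rcases eq_or_ne b NE.one with rfl | hb1
  · rw [ncat_one]; exact ha
  rcases eq_or_ne a NE.one with rfl | ha1
  · rw [one_ncat]; exact hb
  cases a with
  | zero => exact absurd rfl ha
  | one => exact absurd rfl ha1
  | cat f₁ f₂ => rw [cat_ncat _ _ _ hb hb1]; simp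
  | letter n => rw [base_ncat _ _ (by simp [NE.isCat]) ha ha1 hb hb1]; simp
  | union es => rw [base_ncat _ _ (by simp [NE.isCat]) ha ha1 hb hb1]; simp
  | star f => rw [base_ncat _ _ (by simp [NE.isCat]) ha ha1 hb hb1]; simp

lemma ncat_ne_one {a b : NE} (ha0 : a ≠ NE.zero) (ha1 : a ≠ NE.one)
    (hb0 : b ≠ NE.zero) (hb1 : b ≠ NE.one) : NE.ncat a b ≠ NE.one := by
  cases a with
  | zero => exact absurd rfl ha0
  | one => exact absurd rfl ha1
  | cat f₁ f₂ => rw [cat_ncat _ _ _ hb0 hb1]; simp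
  | letter n => rw [base_ncat _ _ (by simp [NE.isCat]) ha0 ha1 hb0 hb1]; simp
  | union es => rw [base_ncat _ _ (by simp [NE.isCat]) ha0 ha1 hb0 hb1]; simp
  | star f => rw [base_ncat _ _ (by simp [NE.isCat]) ha0 ha1 hb0 hb1]; simp

theorem ncat_assoc (a b c : NE) : NE.ncat (NE.ncat a b) c = NE.ncat a (NE.ncat b c) := by
  rcases eq_or_ne b NE.zero with rfl | hb0
  · rw [ncat_zero, zero_ncat, ncat_zero]
  rcases eq_or_ne c NE.zero with rfl | hc0
  · rw [ncat_zero, ncat_zero, ncat_zero]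
  rcases eq_or_ne b NE.one with rfl | hb1
  · rw [ncat_one, one_ncat]
  rcases eq_or_ne c NE.one with rfl | hc1
  · rw [ncat_one, ncat_one]
  cases a with
  | zero => rw [zero_ncat, zero_ncat, zero_ncat]
  | one => rw [one_ncat, one_ncat]
  | letter n =>
    rw [base_ncat _ _ (by simp [NE.isCat]) (by simp) (by simp) hb0 hb1,
      cat_ncat _ _ _ hc0 hc1,
      base_ncat _ _ (by simp [NE.isCat]) (by simp) (by simp)
        (ncat_ne_zero hb0 hc0) (ncat_ne_one hb0 hb1 hc0 hc1)]
  | union es =>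
    rw [base_ncat _ _ (by simp [NE.isCat]) (by simp) (by simp) hb0 hb1,
      cat_ncat _ _ _ hc0 hc1,
      base_ncat _ _ (by simp [NE.isCat]) (by simp) (by simp)
        (ncat_ne_zero hb0 hc0) (ncat_ne_one hb0 hb1 hc0 hc1)]
  | star f =>
    rw [base_ncat _ _ (by simp [NE.isCat]) (by simp) (by simp) hb0 hb1,
      cat_ncat _ _ _ hc0 hc1,
      base_ncat _ _ (by simp [NE.isCat]) (by simp) (by simp)
        (ncat_ne_zero hb0 hc0) (ncat_ne_one hb0 hb1 hc0 hc1)]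
  | cat f₁ f₂ =>
    rw [cat_ncat _ _ _ hb0 hb1, cat_ncat _ _ _ hc0 hc1, ncat_assoc f₂ b c,
      cat_ncat _ _ _ (ncat_ne_zero hb0 hc0) (ncat_ne_one hb0 hb1 hc0 hc1)]
termination_by sizeOf a
decreasing_by simp_wf

lemma good_ncat {a b : NE} (h₁ : Good lt a) (h₂ : Good lt b) : Good lt (NE.ncat a b) := by
  rcases eq_or_ne a NE.zero with rfl | ha0
  · rw [zero_ncat]; exact good_zero lt
  rcases eq_or_ne b NE.zero with rfl | hb0
  · rw [ncat_zero]; exact good_zero lt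
  rcases eq_or_ne a NE.one with rfl | ha1
  · rw [one_ncat]; exact h₂
  rcases eq_or_ne b NE.one with rfl | hb1
  · rw [ncat_one]; exact h₁
  cases a with
  | zero => exact absurd rfl ha0
  | one => exact absurd rfl ha1
  | cat f₁ f₂ =>
    rw [cat_ncat _ _ _ hb0 hb1]
    exact good_of_shape lt _ (by simp [NE.isUnion]) (by simp)
  | letter n =>
    rw [base_ncat _ _ (by simp [NE.isCat]) ha0 ha1 hb0 hb1]
    exact good_of_shape lt _ (by simp [NE.isUnion]) (by simp)
  | union es =>
    rw [base_ncat _ _ (by simp [NE.isCat]) ha0 ha1 hb0 hb1]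
    exact good_of_shape lt _ (by simp [NE.isUnion]) (by simp)
  | star f =>
    rw [base_ncat _ _ (by simp [NE.isCat]) ha0 ha1 hb0 hb1]
    exact good_of_shape lt _ (by simp [NE.isUnion]) (by simp)

lemma good_niter (e : NE) : Good lt (NE.niter e) := by
  cases e <;> exact good_of_shape lt _ (by simp [NE.niter, NE.isUnion]) (by simp [NE.niter])

lemma niter_niter (e : NE) : NE.niter (NE.niter e) = NE.niter e := by cases e <;> rfl

lemma good_normRE (E : RegularExpression ℕ) : Good lt (normRE lt E) := by
  induction E with
  | zero => exact good_zero lt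
  | epsilon => exact good_of_shape lt NE.one (by simp [NE.isUnion]) (by simp)
  | char n => exact good_of_shape lt (NE.letter n) (by simp [NE.isUnion]) (by simp)
  | plus a b iha ihb => exact (good_nunion lt iha ihb).1
  | comp a b iha ihb => exact good_ncat lt iha ihb
  | star a ih => exact good_niter lt _

end Aux

theorem cong_norm_eq (lt : NE → NE → Prop) [DecidableRel lt] [IsStrictTotalOrder NE lt]
    (E₁ E₂ : RegularExpression ℕ) (h : Cong E₁ E₂) :
    normRE lt E₁ = normRE lt E₂ := by
  induction h with
  | refl e => rfl
  | symm _ ih => exact ih.symm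
  | trans _ _ ih₁ ih₂ => exact ih₁.trans ih₂
  | plus_congr _ _ ih₁ ih₂ =>
    show NE.nunion lt _ _ = NE.nunion lt _ _
    rw [ih₁, ih₂]
  | comp_congr _ _ ih₁ ih₂ =>
    show NE.ncat _ _ = NE.ncat _ _
    rw [ih₁, ih₂]
  | star_congr _ ih =>
    show NE.niter _ = NE.niter _
    rw [ih]
  | plus_idem e => exact nunion_self lt (good_normRE lt e)
  | zero_plus e => exact zero_nunion lt (good_normRE lt e)
  | plus_zero e => exact nunion_zero lt (good_normRE lt e)
  | zero_comp e => exact zero_ncat _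
  | comp_zero e => exact ncat_zero _
  | one_comp e => exact one_ncat _
  | comp_one e => exact ncat_one _
  | plus_assoc a b c =>
    exact nunion_assoc lt (good_normRE lt a) (good_normRE lt b) (good_normRE lt c)
  | plus_comm a b => exact nunion_comm lt _ _
  | comp_assoc a b c => exact (ncat_assoc _ _ _).symm
  | zero_star => rfl
  | one_star => rfl
  | star_star e => exact niter_niter _
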